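/- arXiv:2406.06557 — 5 statements merged into one kernel-verified Lean document; each statement's English description precedes it below -/
import Mathlib

section
/- Let p ≥ 3 be prime, q = p^t with t ≥ 1, s ≥ 1, and a ∈ ℤ. Then the product of all integers j with a ≤ j ≤ a + p^s - 1 that are coprime to q is congruent to -1 modulo p^s. -/
private lemma wc_sq_eq_one (p s : ℕ) (hp : p.Prime) (hp3 : 3 ≤ p) (hs : 1 ≤ s)
    (x : ZMod (p ^ s)) (h : x * x = 1) : x = 1 ∨ x = -1 := by
  haveI : NeZero (p ^ s) := ⟨pow_ne_zero _ hp.ne_zero⟩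
  set n : ℤ := (x.val : ℤ) with hn
  have hx : ((n : ℤ) : ZMod (p ^ s)) = x := by
    rw [hn]; push_cast [ZMod.natCast_val, ZMod.cast_id]; rfl
  have hpI : Prime (p : ℤ) := Nat.prime_iff_prime_int.mp hp
  have hc : (((p ^ s : ℕ)) : ℤ) = (p : ℤ) ^ s := by push_cast; ring
  have hdvd : ((p : ℤ) ^ s) ∣ (n - 1) * (n + 1) := by
    have h0 : (((n - 1) * (n + 1) : ℤ) : ZMod (p ^ s)) = 0 := by
      push_cast [hx]
      have : (x - 1) * (x + 1) = x * x - 1 := by ring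
      rw [this, h, sub_self]
    have := (ZMod.intCast_zmod_eq_zero_iff_dvd _ _).mp h0
    rwa [hc] at this
  have hps : (p : ℤ) ∣ (n - 1) * (n + 1) :=
    dvd_trans (dvd_pow_self _ (by omega)) hdvd
  have hp2 : ¬ ((p : ℤ) ∣ 2) := by
    intro hd
    have := Int.le_of_dvd (by norm_num) hd
    have : (3 : ℤ) ≤ (p : ℤ) := by exact_mod_cast hp3
    omega
  rcases hpI.dvd_mul.mp hps with h1 | h2
  · left
    have hnd : ¬ (p : ℤ) ∣ (n + 1) := by
      intro hd
      exact hp2 (by have := dvd_sub hd h1; simpa using this)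
    have hco : IsCoprime ((p : ℤ) ^ s) (n + 1) :=
      (hpI.coprime_iff_not_dvd.mpr hnd).pow_left
    have hd1 : ((p : ℤ) ^ s) ∣ (n - 1) := hco.dvd_of_dvd_mul_right hdvd
    have h0 : (((n - 1 : ℤ)) : ZMod (p ^ s)) = 0 := by
      rw [ZMod.intCast_zmod_eq_zero_iff_dvd]
      rwa [hc]
    push_cast [hx] at h0
    linear_combination h0
  · right
    have hnd : ¬ (p : ℤ) ∣ (n - 1) := by
      intro hd
      exact hp2 (by have := dvd_sub h2 hd; simpa using this)
    have hco : IsCoprime ((p : ℤ) ^ s) (n - 1) :=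
      (hpI.coprime_iff_not_dvd.mpr hnd).pow_left
    have hd1 : ((p : ℤ) ^ s) ∣ (n + 1) :=
      hco.dvd_of_dvd_mul_right (by rwa [mul_comm] at hdvd)
    have h0 : (((n + 1 : ℤ)) : ZMod (p ^ s)) = 0 := by
      rw [ZMod.intCast_zmod_eq_zero_iff_dvd]
      rwa [hc]
    push_cast [hx] at h0
    linear_combination h0

private lemma wc_units_prod (p s : ℕ) (hp : p.Prime) (hp3 : 3 ≤ p) (hs : 1 ≤ s)
    [NeZero (p ^ s)] :
    ∏ u : (ZMod (p ^ s))ˣ, u = (-1 : (ZMod (p ^ s))ˣ) := by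
  have hiff : ∀ u : (ZMod (p ^ s))ˣ, u⁻¹ = u → u = 1 ∨ u = -1 := by
    intro u h
    have hval : (u : ZMod (p ^ s)) * (u : ZMod (p ^ s)) = 1 := by
      have := u.mul_inv
      rw [h] at this
      exact_mod_cast this
    rcases wc_sq_eq_one p s hp hp3 hs _ hval with h1 | h1
    · left; exact Units.ext (by simpa using h1)
    · right; exact Units.ext (by simpa using h1)
  have key : (∏ x ∈ Finset.univ.erase (-1 : (ZMod (p ^ s))ˣ), x) = 1 := by
    refine Finset.prod_involution (fun x _ => x⁻¹) (fun a _ => mul_inv_cancel a)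
      (fun a ha hne => ?_) (fun a ha => ?_) (fun a ha => inv_inv a)
    · intro h
      have h' : a⁻¹ = a := h
      rcases hiff a h' with h1 | h1
      · exact hne h1
      · exact (Finset.mem_erase.mp ha).1 h1
    · show a⁻¹ ∈ Finset.univ.erase (-1 : (ZMod (p ^ s))ˣ)
      rw [Finset.mem_erase]
      refine ⟨fun h => (Finset.mem_erase.mp ha).1 ?_, Finset.mem_univ _⟩
      rw [← inv_inv a, h]; simp
  rw [← Finset.insert_erase (Finset.mem_univ (-1 : (ZMod (p ^ s))ˣ)),
    Finset.prod_insert (Finset.notMem_erase _ _), key, mul_one]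

theorem wilson_cong_odd (p t s : ℕ) (hp : p.Prime) (hp3 : 3 ≤ p) (ht : 1 ≤ t)
    (hs : 1 ≤ s) (a : ℤ) :
    (∏ j ∈ (Finset.Icc a (a + (p : ℤ) ^ s - 1)).filter
        (fun j => Int.gcd ((p : ℤ) ^ t) j = 1), j) ≡ -1 [ZMOD (p : ℤ) ^ s] := by
  haveI : NeZero (p ^ s) := ⟨pow_ne_zero _ hp.ne_zero⟩
  have hpI : Prime (p : ℤ) := Nat.prime_iff_prime_int.mp hp
  have hc : ((p : ℤ) ^ s) = ((p ^ s : ℕ) : ℤ) := by push_cast; ring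
  have hNpos : (0 : ℤ) < ((p ^ s : ℕ) : ℤ) := by positivity
  have hzero : ((p : ZMod (p ^ s))) ^ s = 0 := by
    rw [← Nat.cast_pow, ZMod.natCast_self]
  -- the coprimality condition is equivalent to being a unit mod p^s
  have hunitiff : ∀ j : ℤ, Int.gcd ((p : ℤ) ^ t) j = 1 ↔ IsUnit ((j : ZMod (p ^ s))) := by
    intro j
    rw [← Int.isCoprime_iff_gcd_eq_one, IsCoprime.pow_left_iff (by omega),
      hpI.coprime_iff_not_dvd]
    constructor
    · intro hnd
      have hco : IsCoprime ((p : ℤ) ^ s) j := (hpI.coprime_iff_not_dvd.mpr hnd).pow_left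
      obtain ⟨u, v, huv⟩ := hco
      refine IsUnit.of_mul_eq_one ((v : ZMod (p ^ s))) ?_
      have h1 : ((u * (p : ℤ) ^ s + v * j : ℤ) : ZMod (p ^ s)) = ((1 : ℤ) : ZMod (p ^ s)) := by
        rw [huv]
      push_cast at h1
      rw [hzero] at h1
      linear_combination h1
    · intro hu hd
      have hps : p ∣ p ^ s := dvd_pow_self _ (by omega)
      have hu2 : IsUnit ((ZMod.castHom hps (ZMod p)) ((j : ZMod (p ^ s)))) := hu.map _
      have hj0 : ((j : ZMod p)) = 0 := (ZMod.intCast_zmod_eq_zero_iff_dvd _ _).mpr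
        (by exact_mod_cast hd)
      rw [show ((ZMod.castHom hps (ZMod p)) ((j : ZMod (p ^ s)))) = (j : ZMod p) by simp,
        hj0] at hu2
      haveI : Fact (1 < p) := ⟨by omega⟩
      exact (not_isUnit_zero : ¬ IsUnit (0 : ZMod p)) hu2
  rw [hc, ← ZMod.intCast_eq_intCast_iff]
  push_cast
  -- now prove the product of casts equals -1 in ZMod (p^s)
  have hbij : (∏ j ∈ (Finset.Icc a (a + (p : ℤ) ^ s - 1)).filter
      (fun j => Int.gcd ((p : ℤ) ^ t) j = 1), ((j : ZMod (p ^ s)))) =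
      ∏ u : (ZMod (p ^ s))ˣ, ((u : ZMod (p ^ s))) := by
    refine Finset.prod_bij
      (fun j hj => ((hunitiff j).mp (Finset.mem_filter.mp hj).2).unit)
      (fun j hj => Finset.mem_univ _) ?_ ?_ ?_
    · intro j₁ hj₁ j₂ hj₂ hEq
      have hv : ((j₁ : ZMod (p ^ s))) = ((j₂ : ZMod (p ^ s))) := by
        have h1 := ((hunitiff j₁).mp (Finset.mem_filter.mp hj₁).2).unit_spec
        have h2 := ((hunitiff j₂).mp (Finset.mem_filter.mp hj₂).2).unit_spec
        rw [← h1, ← h2]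
        exact congrArg Units.val hEq
      have hmod := (ZMod.intCast_eq_intCast_iff _ _ _).mp hv
      have hdvd : ((p ^ s : ℕ) : ℤ) ∣ j₂ - j₁ := Int.ModEq.dvd hmod
      have hI₁ := Finset.mem_Icc.mp (Finset.mem_filter.mp hj₁).1
      have hI₂ := Finset.mem_Icc.mp (Finset.mem_filter.mp hj₂).1
      rw [hc] at hI₁ hI₂
      have : j₂ - j₁ = 0 := Int.eq_zero_of_abs_lt_dvd hdvd (by rw [abs_lt]; omega)
      omega
    · intro b _
      set r : ℤ := (((b : ZMod (p ^ s)).val : ℕ) : ℤ) with hr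
      have hrb : ((r : ZMod (p ^ s))) = (b : ZMod (p ^ s)) := by
        rw [hr]; push_cast [ZMod.natCast_val, ZMod.cast_id]; rfl
      set j : ℤ := a + (r - a) % ((p ^ s : ℕ) : ℤ) with hjdef
      have hjcast : ((j : ZMod (p ^ s))) = (b : ZMod (p ^ s)) := by
        rw [hjdef, Int.cast_add, ZMod.intCast_mod, Int.cast_sub, ← hrb]; ring
      have hmem : j ∈ (Finset.Icc a (a + (p : ℤ) ^ s - 1)).filter
          (fun j => Int.gcd ((p : ℤ) ^ t) j = 1) := by
        rw [Finset.mem_filter, Finset.mem_Icc]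
        refine ⟨⟨?_, ?_⟩, ?_⟩
        · have := Int.emod_nonneg (r - a) (by omega : ((p ^ s : ℕ) : ℤ) ≠ 0)
          omega
        · have := Int.emod_lt_of_pos (r - a) hNpos
          rw [hc]; omega
        · rw [hunitiff j, hjcast]; exact b.isUnit
      refine ⟨j, hmem, ?_⟩
      apply Units.ext
      rw [((hunitiff j).mp (Finset.mem_filter.mp hmem).2).unit_spec, hjcast]
    · intro j hj
      exact (((hunitiff j).mp (Finset.mem_filter.mp hj).2).unit_spec).symm
  rw [hbij]
  simpa using congrArg (Units.coeHom (ZMod (p ^ s))) (wc_units_prod p s hp hp3 hs)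
end

section
/- Let p ≥ 3 be prime, q = p^t with t ≥ 1, n ∈ ℕ, and m, s ≥ 1. Then the product of all integers j coprime to q with n+1 ≤ j ≤ n+m·p^s is congruent to (-1)^m modulo p^s. -/
open Finset

-- square roots of 1 in ZMod p^s, p odd prime
lemma sq_one_aux (p s : ℕ) (hp : p.Prime) (hp3 : 3 ≤ p) (hs : 1 ≤ s)
    (x : ZMod (p ^ s)) (hx : x * x = 1) : x = 1 ∨ x = -1 := by
  haveI : NeZero (p ^ s) := ⟨pow_ne_zero s hp.pos.ne'⟩
  set a : ℤ := (x.val : ℤ) with ha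
  have hxa : ((a : ℤ) : ZMod (p ^ s)) = x := by
    simp [ha, ZMod.natCast_val, ZMod.intCast_cast, ZMod.cast_id]
  have hdvd : ((p : ℤ) ^ s) ∣ (a - 1) * (a + 1) := by
    have : (((a - 1) * (a + 1) : ℤ) : ZMod (p ^ s)) = 0 := by
      push_cast
      rw [hxa]
      linear_combination hx
    rwa [ZMod.intCast_zmod_eq_zero_iff_dvd, Nat.cast_pow] at this
  have hpI : Prime (p : ℤ) := Nat.prime_iff_prime_int.mp hp
  by_cases h1 : (p : ℤ) ∣ (a - 1)
  · -- then p does not divide a+1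
    have h2 : ¬ (p : ℤ) ∣ (a + 1) := by
      intro h2
      have : (p : ℤ) ∣ 2 := by
        have := dvd_sub h2 h1
        simpa using this
      have := Int.le_of_dvd (by norm_num) this
      omega
    have hcop : IsCoprime ((p : ℤ) ^ s) (a + 1) :=
      (IsCoprime.pow_left ((hpI.coprime_iff_not_dvd).mpr h2))
    have : ((p : ℤ) ^ s) ∣ (a - 1) := (hcop.dvd_of_dvd_mul_right) hdvd
    left
    have : (((a - 1 : ℤ)) : ZMod (p ^ s)) = 0 := by
      rw [ZMod.intCast_zmod_eq_zero_iff_dvd]; push_cast; exact this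
    push_cast at this
    rw [hxa] at this
    linear_combination this
  · have hcop : IsCoprime ((p : ℤ) ^ s) (a - 1) :=
      (IsCoprime.pow_left ((hpI.coprime_iff_not_dvd).mpr h1))
    have : ((p : ℤ) ^ s) ∣ (a + 1) := (hcop.dvd_of_dvd_mul_left) hdvd
    right
    have : (((a + 1 : ℤ)) : ZMod (p ^ s)) = 0 := by
      rw [ZMod.intCast_zmod_eq_zero_iff_dvd]; push_cast; exact this
    push_cast at this
    rw [hxa] at this
    linear_combination this

lemma prod_units_eq_neg_one (p s : ℕ) (hp : p.Prime) (hp3 : 3 ≤ p) (hs : 1 ≤ s)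
    [NeZero (p ^ s)] [DecidablePred (fun x : ZMod (p ^ s) => IsUnit x)] :
    ∏ x ∈ Finset.univ.filter (fun x : ZMod (p ^ s) => IsUnit x), x = -1 := by
  have hps3 : 3 ≤ p ^ s := le_trans hp3 (Nat.le_self_pow (by omega) p)
  have hne : (1 : ZMod (p ^ s)) ≠ -1 := by
    intro h
    have h2 : ((2 : ℕ) : ZMod (p ^ s)) = 0 := by push_cast; linear_combination h
    rw [ZMod.natCast_eq_zero_iff] at h2
    have := Nat.le_of_dvd (by norm_num) h2
    omega
  have h1mem : (1 : ZMod (p ^ s)) ∈ Finset.univ.filter (fun x : ZMod (p ^ s) => IsUnit x) := by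
    simp
  have hm1mem : (-1 : ZMod (p ^ s)) ∈ Finset.univ.filter (fun x : ZMod (p ^ s) => IsUnit x) := by
    simp
  set T := ((Finset.univ.filter (fun x : ZMod (p ^ s) => IsUnit x)).erase 1).erase (-1) with hT
  have hTmem : ∀ a ∈ T, a ≠ -1 ∧ a ≠ 1 ∧ IsUnit a := by
    intro a ha
    simp only [hT, Finset.mem_erase, Finset.mem_filter] at ha
    exact ⟨ha.1, ha.2.1, ha.2.2.2⟩
  have hTprod : ∏ x ∈ T, x = 1 := by
    apply Finset.prod_involution (g := fun a _ => a⁻¹)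
    · intro a ha
      exact ZMod.mul_inv_of_unit a (hTmem a ha).2.2
    · intro a ha _
      obtain ⟨ham1, ha1, hu⟩ := hTmem a ha
      intro heq
      have hsq : a * a = 1 := by
        nth_rewrite 1 [← heq]
        exact ZMod.inv_mul_of_unit a hu
      rcases sq_one_aux p s hp hp3 hs a hsq with h | h
      · exact ha1 h
      · exact ham1 h
    · intro a ha
      obtain ⟨ham1, ha1, hu⟩ := hTmem a ha
      have h1 := ZMod.mul_inv_of_unit a hu
      have hui : IsUnit a⁻¹ := IsUnit.of_mul_eq_one _ (ZMod.inv_mul_of_unit a hu)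
      have h2 := ZMod.mul_inv_of_unit a⁻¹ hui
      calc a⁻¹⁻¹ = (a * a⁻¹) * a⁻¹⁻¹ := by rw [h1, one_mul]
        _ = a * (a⁻¹ * a⁻¹⁻¹) := by ring
        _ = a := by rw [h2, mul_one]
    · intro a ha
      obtain ⟨ham1, ha1, hu⟩ := hTmem a ha
      have hui : IsUnit a⁻¹ := IsUnit.of_mul_eq_one _ (ZMod.inv_mul_of_unit a hu)
      simp only [hT, Finset.mem_erase, Finset.mem_filter]
      refine ⟨?_, ?_, Finset.mem_univ _, hui⟩
      · intro h
        apply ham1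
        have h1 := ZMod.mul_inv_of_unit a hu
        rw [h] at h1
        linear_combination -h1
      · intro h
        apply ha1
        have h1 := ZMod.mul_inv_of_unit a hu
        rw [h] at h1
        linear_combination h1
  rw [← Finset.prod_erase_mul _ _ h1mem]
  have hm1mem' : (-1 : ZMod (p ^ s)) ∈ (Finset.univ.filter (fun x : ZMod (p ^ s) => IsUnit x)).erase 1 :=
    Finset.mem_erase.mpr ⟨Ne.symm hne, hm1mem⟩
  rw [← Finset.prod_erase_mul _ _ hm1mem', ← hT, hTprod]
  ring

lemma block_prod (p s : ℕ) (hp : p.Prime) (hp3 : 3 ≤ p) (hs : 1 ≤ s) (n : ℕ)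
    [NeZero (p ^ s)] :
    ∏ j ∈ (Finset.Ioc n (n + p ^ s)).filter (fun j => ¬ p ∣ j),
      ((j : ZMod (p ^ s))) = -1 := by
  classical
  have hps : 0 < p ^ s := pow_pos hp.pos s
  have key : ∀ j : ℕ, ¬ p ∣ j ↔ IsUnit ((j : ZMod (p ^ s))) := by
    intro j
    rw [ZMod.isUnit_iff_coprime, Nat.coprime_pow_right_iff (by omega : 0 < s), Nat.coprime_comm,
      hp.coprime_iff_not_dvd]
  rw [← prod_units_eq_neg_one p s hp hp3 hs]
  refine Finset.prod_nbij' (i := fun j => ((j : ZMod (p ^ s))))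
    (j := fun x => n + 1 + (x - ((n + 1 : ℕ) : ZMod (p ^ s))).val) ?_ ?_ ?_ ?_ ?_
  · intro a ha
    simp only [Finset.mem_filter, Finset.mem_Ioc] at ha
    simp only [Finset.mem_filter, Finset.mem_univ, true_and]
    exact (key a).mp ha.2
  · intro x hx
    simp only [Finset.mem_filter, Finset.mem_univ, true_and] at hx
    have hlt : (x - ((n + 1 : ℕ) : ZMod (p ^ s))).val < p ^ s := ZMod.val_lt _
    have hcast : (((n + 1 + (x - ((n + 1 : ℕ) : ZMod (p ^ s))).val : ℕ)) : ZMod (p ^ s)) = x := by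
      push_cast
      rw [ZMod.natCast_val, ZMod.cast_id]
      push_cast
      ring
    simp only [Finset.mem_filter, Finset.mem_Ioc]
    refine ⟨⟨by omega, by omega⟩, ?_⟩
    rw [key]
    rw [hcast]
    exact hx
  · intro a ha
    simp only [Finset.mem_filter, Finset.mem_Ioc] at ha
    obtain ⟨⟨h1, h2⟩, -⟩ := ha
    rw [← Nat.cast_sub (by omega : n + 1 ≤ a), ZMod.val_cast_of_lt (by omega)]
    omega
  · intro x hx
    push_cast
    rw [ZMod.natCast_val, ZMod.cast_id]
    push_cast
    ring
  · intro a ha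
    rfl

lemma prod_blocks (p s : ℕ) (hp : p.Prime) (hp3 : 3 ≤ p) (hs : 1 ≤ s)
    [NeZero (p ^ s)] (m n : ℕ) :
    ∏ j ∈ (Finset.Ioc n (n + m * p ^ s)).filter (fun j => ¬ p ∣ j),
      ((j : ZMod (p ^ s))) = (-1) ^ m := by
  induction m with
  | zero => simp
  | succ m ih =>
    have hps : 0 < p ^ s := pow_pos hp.pos s
    have hsplit : Finset.Ioc n (n + (m + 1) * p ^ s)
        = Finset.Ioc n (n + m * p ^ s) ∪ Finset.Ioc (n + m * p ^ s) (n + (m + 1) * p ^ s) :=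
      (Finset.Ioc_union_Ioc_eq_Ioc (by nlinarith) (by nlinarith)).symm
    have hdisj : Disjoint ((Finset.Ioc n (n + m * p ^ s)).filter (fun j => ¬ p ∣ j))
        ((Finset.Ioc (n + m * p ^ s) (n + (m + 1) * p ^ s)).filter (fun j => ¬ p ∣ j)) :=
      by
        apply Finset.disjoint_filter_filter
        rw [Finset.disjoint_left]
        intro a ha hb
        simp only [Finset.mem_Ioc] at ha hb
        omega
    rw [hsplit, Finset.filter_union, Finset.prod_union hdisj, ih]
    have h2 : n + (m + 1) * p ^ s = (n + m * p ^ s) + p ^ s := by ring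
    rw [h2, block_prod p s hp hp3 hs (n + m * p ^ s)]
    ring

theorem qfact_quotient_cong_gen (p t s n m : ℕ) (hp : p.Prime) (hp3 : 3 ≤ p)
    (ht : 1 ≤ t) (hs : 1 ≤ s) (hm : 1 ≤ m) :
    (∏ j ∈ (Finset.Icc (n + 1) (n + m * p ^ s)).filter
        (fun j => Nat.gcd (p ^ t) j = 1), (j : ℤ)) ≡ (-1) ^ m [ZMOD (p : ℤ) ^ s] := by
  haveI : NeZero (p ^ s) := ⟨pow_ne_zero s hp.pos.ne'⟩
  have hfilter : (Finset.Icc (n + 1) (n + m * p ^ s)).filter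
        (fun j => Nat.gcd (p ^ t) j = 1)
      = (Finset.Ioc n (n + m * p ^ s)).filter (fun j => ¬ p ∣ j) := by
    rw [← Finset.Icc_add_one_left_eq_Ioc]
    apply Finset.filter_congr
    intro j _
    rw [← Nat.coprime_iff_gcd_eq_one, Nat.coprime_pow_left_iff (by omega : 0 < t),
      hp.coprime_iff_not_dvd]
  rw [hfilter]
  have hmod : ((p : ℤ)) ^ s = ((p ^ s : ℕ) : ℤ) := by push_cast; ring
  rw [hmod, ← ZMod.intCast_eq_intCast_iff]
  push_cast
  exact prod_blocks p s hp hp3 hs m n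
end

section
/- Let p ≥ 3 be prime, q = p^t with t ≥ 1, n ∈ ℕ, s ≥ 1. Then p^s divides (n+p^s)!_q + n!_q; equivalently |(n+p^s)!_q + n!_q|_p ≤ p^{-s}. -/
set_option maxHeartbeats 1000000

open Finset

/-- The `q`-adic factorial: product of all `j` with `1 ≤ j ≤ n` coprime to `q`. -/
def qfact (q n : ℕ) : ℕ :=
  ∏ j ∈ (Finset.Icc 1 n).filter (fun j => Nat.gcd q j = 1), j

section aux

variable {p s : ℕ}

lemma sq_eq_one_cases (hp : p.Prime) (hp3 : 3 ≤ p) (a : ZMod (p ^ s))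
    (h : a ^ 2 = 1) : a = 1 ∨ a = -1 := by
  haveI : NeZero (p ^ s) := ⟨pow_ne_zero _ hp.pos.ne'⟩
  set x : ℤ := (a.val : ℤ) with hx
  have hax : ((x : ℤ) : ZMod (p ^ s)) = a := by
    simp [hx, ZMod.natCast_val, ZMod.intCast_cast, ZMod.intCast_zmod_cast]
  have hdvd : ((p : ℤ) ^ s) ∣ (x - 1) * (x + 1) := by
    have h0 : (((x ^ 2 - 1 : ℤ)) : ZMod (p ^ s)) = 0 := by
      push_cast
      rw [hax, h]; ring
    rw [ZMod.intCast_zmod_eq_zero_iff_dvd, Nat.cast_pow] at h0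
    exact (show (x - 1) * (x + 1) = x ^ 2 - 1 by ring) ▸ h0
  have hpZ : Prime (p : ℤ) := Nat.prime_iff_prime_int.mp hp
  have hnot_both : ¬ ((p : ℤ) ∣ x - 1 ∧ (p : ℤ) ∣ x + 1) := by
    rintro ⟨h1, h2⟩
    have h3 : (p : ℤ) ∣ 2 := by
      have := dvd_sub h2 h1
      simpa using this
    have := Int.le_of_dvd (by norm_num) h3
    omega
  by_cases hc : (p : ℤ) ∣ x + 1
  · right
    have h1 : ¬ (p : ℤ) ∣ x - 1 := fun h1 => hnot_both ⟨h1, hc⟩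
    have hcop : IsCoprime ((p : ℤ) ^ s) (x - 1) :=
      (IsCoprime.pow_left ((hpZ.irreducible.coprime_iff_not_dvd).mpr h1))
    have h4 : ((p : ℤ) ^ s) ∣ x + 1 :=
      hcop.dvd_of_dvd_mul_left ((show (x - 1) * (x + 1) = (x + 1) * (x - 1) by ring) ▸ hdvd)
    have h5 : (((x + 1 : ℤ)) : ZMod (p ^ s)) = 0 := by
      rw [ZMod.intCast_zmod_eq_zero_iff_dvd]; push_cast; exact h4
    push_cast at h5
    rw [hax] at h5
    linear_combination h5
  · left
    have hcop : IsCoprime ((p : ℤ) ^ s) (x + 1) :=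
      (IsCoprime.pow_left ((hpZ.irreducible.coprime_iff_not_dvd).mpr hc))
    have h4 : ((p : ℤ) ^ s) ∣ x - 1 := hcop.dvd_of_dvd_mul_right hdvd
    have h5 : (((x - 1 : ℤ)) : ZMod (p ^ s)) = 0 := by
      rw [ZMod.intCast_zmod_eq_zero_iff_dvd]; push_cast; exact h4
    push_cast at h5
    rw [hax] at h5
    linear_combination h5

lemma prod_units_eq_neg_one_s9 (hp : p.Prime) (hp3 : 3 ≤ p) (hs : 1 ≤ s) :
    haveI : NeZero (p ^ s) := ⟨pow_ne_zero _ hp.pos.ne'⟩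
    ∏ u : (ZMod (p ^ s))ˣ, u = (-1 : (ZMod (p ^ s))ˣ) := by
  haveI : NeZero (p ^ s) := ⟨pow_ne_zero _ hp.pos.ne'⟩
  haveI : Fact (2 < p ^ s) :=
    ⟨lt_of_lt_of_le (by omega) (Nat.le_self_pow (by omega) p)⟩
  classical
  have key : ∀ a : (ZMod (p ^ s))ˣ, a⁻¹ = a → a = 1 ∨ a = -1 := by
    intro a ha
    have h2 : (a : ZMod (p ^ s)) ^ 2 = 1 := by
      have h3 : a ^ 2 = 1 := by
        rw [sq]
        nth_rewrite 1 [← ha]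
        simp
      have := congrArg (fun u : (ZMod (p ^ s))ˣ => (u : ZMod (p ^ s))) h3
      simpa using this
    rcases sq_eq_one_cases hp hp3 _ h2 with h | h
    · left; ext; simpa using h
    · right; ext; simpa using h
  have h1 : (∏ x ∈ (univ : Finset (ZMod (p ^ s))ˣ).erase (-1), x) = 1 := by
    refine prod_involution (fun x _ => x⁻¹) (fun a ha => by simp)
      (fun a ha hne hinv => ?_) (fun a ha => ?_) (fun a ha => by simp)
    · rcases key a hinv with h | h
      · exact hne h
      · rw [h] at ha; simp at ha
    · simp only [mem_erase, mem_univ, and_true] at ha ⊢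
      intro hcon
      apply ha
      rw [← inv_inv a, hcon]
      simp
  rw [← insert_erase (mem_univ (-1 : (ZMod (p ^ s))ˣ)), prod_insert (notMem_erase _ _), h1,
    mul_one]

end aux

theorem pow_dvd_qfact_add (p t s n : ℕ) (hp : p.Prime) (hp3 : 3 ≤ p)
    (ht : 1 ≤ t) (hs : 1 ≤ s) :
    p ^ s ∣ qfact (p ^ t) (n + p ^ s) + qfact (p ^ t) n := by
  haveI : NeZero (p ^ s) := ⟨pow_ne_zero _ hp.pos.ne'⟩
  classical
  set N := p ^ s with hN
  set q := p ^ t with hq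
  have hqf : ∀ m, qfact q m = ∏ j ∈ Ioc 0 m, (if Nat.gcd q j = 1 then j else 1) := by
    intro m
    rw [qfact, ← Finset.Icc_add_one_left_eq_Ioc]
    exact prod_filter _ _
  have hsplit : qfact q (n + N)
      = qfact q n * ∏ j ∈ Ioc n (n + N), (if Nat.gcd q j = 1 then j else 1) := by
    rw [hqf, hqf, ← prod_Ioc_consecutive _ (Nat.zero_le n) (Nat.le_add_right n N)]
  suffices h : ((qfact q (n + N) + qfact q n : ℕ) : ZMod N) = 0 by
    rwa [ZMod.natCast_eq_zero_iff] at h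
  -- the key product over one period
  have hcond : ∀ j : ℕ, (Nat.gcd q j = 1) ↔ IsUnit ((j : ℕ) : ZMod N) := by
    intro j
    have h1 : Nat.gcd q j = 1 ↔ Nat.Coprime p j := by
      rw [hq]
      show Nat.Coprime (p ^ t) j ↔ Nat.Coprime p j
      exact Nat.coprime_pow_left_iff (show 0 < t by omega) ..
    have h2 : IsUnit ((j : ℕ) : ZMod N) ↔ Nat.Coprime p j := by
      rw [ZMod.isUnit_iff_coprime j N, hN, Nat.coprime_comm, Nat.coprime_pow_left_iff (show 0 < s by omega)]
    rw [h1, h2]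
  set g : ZMod N → ZMod N := fun x => if IsUnit x then x else 1 with hg
  have hP : ((∏ j ∈ Ioc n (n + N), (if Nat.gcd q j = 1 then j else 1) : ℕ) : ZMod N)
      = -1 := by
    rw [Nat.cast_prod]
    have step1 : ∀ j ∈ Ioc n (n + N),
        (((if Nat.gcd q j = 1 then j else 1 : ℕ)) : ZMod N) = g ((j : ℕ) : ZMod N) := by
      intro j _
      by_cases hj : Nat.gcd q j = 1
      · simp [hg, hj, (hcond j).mp hj]
      · have hnu : ¬ IsUnit ((j : ℕ) : ZMod N) := fun h => hj ((hcond j).mpr h)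
        simp [hg, hj, hnu]
    rw [prod_congr rfl step1]
    -- reindex to range N
    have e1 : ∏ j ∈ Ioc n (n + N), g ((j : ℕ) : ZMod N)
        = ∏ k ∈ range N, g (((n + 1 + k : ℕ)) : ZMod N) := by
      rw [← Finset.Icc_add_one_left_eq_Ioc, ← Finset.Ico_add_one_right_eq_Icc, prod_Ico_eq_prod_range]
      have : n + N + 1 - (n + 1) = N := by omega
      rw [this]
    rw [e1]
    have e2 : ∏ k ∈ range N, g (((n + 1 + k : ℕ)) : ZMod N)
        = ∏ x : ZMod N, g (((n + 1 : ℕ) : ZMod N) + x) := by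
      refine prod_nbij' (fun k => ((k : ℕ) : ZMod N)) (fun x => x.val)
        (fun a ha => mem_univ _) (fun x hx => mem_range.mpr (ZMod.val_lt x))
        (fun a ha => ?_) (fun x hx => ?_) (fun a ha => ?_)
      · exact ZMod.val_cast_of_lt (mem_range.mp ha)
      · exact ZMod.natCast_zmod_val x
      · push_cast; ring_nf
    have e4 : ∏ x : ZMod N, g (((n + 1 : ℕ) : ZMod N) + x) = ∏ x : ZMod N, g x :=
      Fintype.prod_bijective _ (Equiv.addLeft (((n + 1 : ℕ) : ZMod N))).bijective _ _
        (fun x => rfl)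
    rw [e2, e4]
    -- product over all elements = product over units = -1
    have e5 : ∏ x : ZMod N, g x = ∏ x ∈ univ.filter (fun x : ZMod N => IsUnit x), x :=
      (prod_filter (fun x : ZMod N => IsUnit x) (fun x => x)).symm
    rw [e5]
    have e3 : ∏ x ∈ univ.filter (fun x : ZMod N => IsUnit x), x
        = ((∏ u : (ZMod N)ˣ, u : (ZMod N)ˣ) : ZMod N) := by
      rw [← Units.coeHom_apply, map_prod]
      refine (prod_bij (fun (u : (ZMod N)ˣ) _ => (u : ZMod N)) ?_ ?_ ?_ ?_).symm
      · intro u _; simp [u.isUnit]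
      · intro a _ b _ h; exact Units.ext h
      · intro x hx
        have hu : IsUnit x := (mem_filter.mp hx).2
        exact ⟨hu.unit, mem_univ _, hu.unit_spec.symm⟩
      · intro u _; rfl
    rw [e3]
    have e6 : (∏ u : (ZMod N)ˣ, u) = (-1 : (ZMod N)ˣ) := prod_units_eq_neg_one_s9 hp hp3 hs
    rw [e6]
    simp
  rw [Nat.cast_add, hsplit, Nat.cast_mul, hP]
  ring
end

section
/- Let q = 2^t with t ≥ 1, n ∈ ℕ, s ≥ 3. Then 2^s divides (n+2^s)!_q − n!_q; equivalently |(n+2^s)!_q − n!_q|_2 ≤ 2^{-s}. -/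
open Finset

namespace QFAux

/-- `g j = j` if `j` is odd, else `1`. -/
def g (j : ℕ) : ℕ := if Odd j then j else 1

/-- Product of the odd numbers in `(a, b]`. -/
def F (a b : ℕ) : ℕ := ∏ j ∈ Finset.Ioc a b, g j

lemma g_odd {j : ℕ} (h : Odd j) : g j = j := if_pos h

lemma g_even {j : ℕ} (h : ¬ Odd j) : g j = 1 := if_neg h

lemma qfact_eq (t n : ℕ) (ht : 1 ≤ t) : qfact (2 ^ t) n = F 0 n := by
  unfold qfact F
  rw [Finset.prod_filter]
  have : Finset.Icc 1 n = Finset.Ioc 0 n := rfl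
  rw [this]
  refine Finset.prod_congr rfl fun j _ => ?_
  have : Nat.gcd (2 ^ t) j = 1 ↔ Odd j := by
    rw [show (Nat.gcd (2 ^ t) j = 1) = Nat.Coprime (2 ^ t) j from rfl,
      Nat.coprime_pow_left_iff ht, Nat.coprime_two_left]
  unfold g
  by_cases h : Odd j
  · rw [if_pos (this.mpr h), if_pos h]
  · rw [if_neg (fun hc => h (this.mp hc)), if_neg h]

lemma F_split {a b c : ℕ} (h1 : a ≤ b) (h2 : b ≤ c) : F a c = F a b * F b c :=
  (Finset.prod_Ioc_consecutive _ h1 h2).symm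

lemma odd_add_two_pow (s j : ℕ) (hs : 1 ≤ s) : Odd (j + 2 ^ s) ↔ Odd j := by
  rcases Nat.exists_eq_add_of_le hs with ⟨k, hk⟩
  subst hk
  simp [Nat.odd_iff, Nat.add_mul_mod_self_left, pow_succ, pow_mul, Nat.add_mod,
    Nat.mul_mod, Nat.pow_mod]

/-- The window product changes by a multiple of `2^s` when shifted by one. -/
lemma step (s n : ℕ) (hs : 1 ≤ s) :
    (2 : ℤ) ^ s ∣ (F (n + 1) (n + 1 + 2 ^ s) : ℤ) - F n (n + 2 ^ s) := by
  have hpos : 0 < 2 ^ s := Nat.pow_pos (by norm_num)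
  have key : g (n + 1) * F (n + 1) (n + 1 + 2 ^ s) = F n (n + 2 ^ s) * g (n + 2 ^ s + 1) := by
    have h1 : F n (n + 1 + 2 ^ s) = F n (n + 1) * F (n + 1) (n + 1 + 2 ^ s) :=
      F_split (Nat.le_succ n) (Nat.le_add_right _ _)
    have h2 : F n (n + 1 + 2 ^ s) = F n (n + 2 ^ s) * g (n + 2 ^ s + 1) := by
      have : n + 1 + 2 ^ s = (n + 2 ^ s) + 1 := by ring
      rw [this]
      unfold F
      rw [Finset.prod_Ioc_succ_top (Nat.le_add_right _ _)]
    have h3 : F n (n + 1) = g (n + 1) := by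
      unfold F
      rw [Nat.Ioc_succ_singleton, Finset.prod_singleton]
    rw [← h3, ← h1, h2]
  by_cases hodd : Odd (n + 1)
  · have hodd2 : Odd (n + 2 ^ s + 1) := by
      rw [show n + 2 ^ s + 1 = (n + 1) + 2 ^ s by ring, odd_add_two_pow s _ hs]
      exact hodd
    rw [g_odd hodd, g_odd hodd2] at key
    have keyZ : ((n : ℤ) + 1) * ((F (n + 1) (n + 1 + 2 ^ s) : ℤ) - F n (n + 2 ^ s)) =
        (F n (n + 2 ^ s) : ℤ) * 2 ^ s := by
      have := congrArg (fun x : ℕ => (x : ℤ)) key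
      push_cast at this
      linarith [this]
    have hdvd : (2 : ℤ) ^ s ∣ ((n : ℤ) + 1) * ((F (n + 1) (n + 1 + 2 ^ s) : ℤ) - F n (n + 2 ^ s)) := by
      rw [keyZ]; exact dvd_mul_left _ _
    have hcop : IsCoprime ((2 : ℤ) ^ s) ((n : ℤ) + 1) := by
      have : Nat.Coprime (2 ^ s) (n + 1) := by
        rw [Nat.coprime_pow_left_iff hs, Nat.coprime_two_left]
        exact hodd
      have := Nat.isCoprime_iff_coprime.mpr this
      push_cast at this
      exact this
    exact hcop.dvd_of_dvd_mul_left hdvd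
  · have hodd2 : ¬ Odd (n + 2 ^ s + 1) := by
      rw [show n + 2 ^ s + 1 = (n + 1) + 2 ^ s by ring, odd_add_two_pow s _ hs]
      exact hodd
    rw [g_even hodd, g_even hodd2, one_mul, mul_one] at key
    rw [key]
    simp

/-- The window product is constant modulo `2^s`. -/
lemma translate (s : ℕ) (hs : 1 ≤ s) (n : ℕ) :
    (2 : ℤ) ^ s ∣ (F n (n + 2 ^ s) : ℤ) - F 0 (2 ^ s) := by
  induction n with
  | zero => simp
  | succ n ih =>
    have := step s n hs
    have : (F (n + 1) (n + 1 + 2 ^ s) : ℤ) - F 0 (2 ^ s) =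
        ((F (n + 1) (n + 1 + 2 ^ s) : ℤ) - F n (n + 2 ^ s)) +
          ((F n (n + 2 ^ s) : ℤ) - F 0 (2 ^ s)) := by ring
    rw [this]
    exact dvd_add (step s n hs) ih

lemma card_filter_odd_range (m : ℕ) :
    ((Finset.range (2 * m)).filter (fun j => Odd j)).card = m := by
  induction m with
  | zero => simp
  | succ m ih =>
    have : 2 * (m + 1) = (2 * m + 1) + 1 := by ring
    rw [this, Finset.range_add_one, Finset.range_add_one, Finset.filter_insert, Finset.filter_insert]
    have h1 : Odd (2 * m + 1) := ⟨m, by ring⟩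
    have h2 : ¬ Odd (2 * m) := by simp [Nat.odd_iff]
    rw [if_pos h1, if_neg h2, Finset.card_insert_of_notMem (by simp), ih]

lemma filter_odd_Ioc_eq (s : ℕ) (hs : 1 ≤ s) :
    (Finset.Ioc 0 (2 ^ s)).filter (fun j => Odd j)
      = (Finset.range (2 ^ s)).filter (fun j => Odd j) := by
  have h2 : 2 ^ s % 2 = 0 := by
    rcases Nat.exists_eq_add_of_le hs with ⟨k, hk⟩
    subst hk
    simp [pow_succ, pow_mul, Nat.mul_mod]
  ext j
  simp only [Finset.mem_filter, Finset.mem_Ioc, Finset.mem_range, Nat.odd_iff]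
  omega

lemma card_odds (s : ℕ) (hs : 1 ≤ s) :
    ((Finset.Ioc 0 (2 ^ s)).filter (fun j => Odd j)).card = 2 ^ (s - 1) := by
  rw [filter_odd_Ioc_eq s hs]
  have : 2 ^ s = 2 * 2 ^ (s - 1) := by
    rcases Nat.exists_eq_add_of_le hs with ⟨k, hk⟩
    subst hk
    rw [show 1 + k - 1 = k by omega, pow_add]
    norm_num
  rw [this, card_filter_odd_range]

lemma F_as_filter (a b : ℕ) (R : Type*) [CommRing R] :
    ((F a b : ℕ) : R) = ∏ j ∈ (Finset.Ioc a b).filter (fun j => Odd j), (j : R) := by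
  unfold F
  push_cast
  rw [Finset.prod_filter]
  refine Finset.prod_congr rfl fun j _ => ?_
  unfold g
  split_ifs <;> simp

/-- The second-half product is congruent to the first-half product mod `2^(s+1)`. -/
lemma half (s : ℕ) (hs : 2 ≤ s) :
    (2 : ℤ) ^ (s + 1) ∣ (F (2 ^ s) (2 ^ (s + 1)) : ℤ) - F 0 (2 ^ s) := by
  set N := 2 ^ (s + 1) with hN
  have hs1 : 1 ≤ s := le_trans (by norm_num) hs
  have key : ((F (2 ^ s) (2 ^ (s + 1)) : ℤ) : ZMod N) = ((F 0 (2 ^ s) : ℤ) : ZMod N) := by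
    push_cast
    rw [F_as_filter _ _ (ZMod N), F_as_filter _ _ (ZMod N)]
    have hNnat : (N : ZMod N) = 0 := by
      simp [hN]
    have hbij : ∏ j ∈ ((Finset.Ioc (2 ^ s) (2 ^ (s + 1))).filter (fun j => Odd j) : Finset ℕ),
          ((j : ℕ) : ZMod N)
        = ∏ k ∈ ((Finset.Ioc 0 (2 ^ s)).filter (fun j => Odd j) : Finset ℕ),
          (((N - k : ℕ) : ℕ) : ZMod N) := by
      refine Finset.prod_nbij' (fun j : ℕ => N - j) (fun k : ℕ => N - k) ?_ ?_ ?_ ?_ ?_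
      · intro a ha
        simp only [Finset.mem_filter, Finset.mem_Ioc] at ha ⊢
        have hev : N % 2 = 0 := by
          simp [hN, Nat.pow_mod]
        have h2s : 2 ^ s % 2 = 0 := by
          rcases Nat.exists_eq_add_of_le hs1 with ⟨k, hk⟩
          subst hk; simp [pow_succ, pow_mul, Nat.mul_mod]
        have hNval : N = 2 ^ s + 2 ^ s := by rw [hN]; ring
        rcases ha with ⟨⟨ha1, ha2⟩, ha3⟩
        rw [Nat.odd_iff] at ha3 ⊢
        omega
      · intro a ha
        simp only [Finset.mem_filter, Finset.mem_Ioc] at ha ⊢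
        have hev : N % 2 = 0 := by simp [hN, Nat.pow_mod]
        have h2s : 2 ^ s % 2 = 0 := by
          rcases Nat.exists_eq_add_of_le hs1 with ⟨k, hk⟩
          subst hk; simp [pow_succ, pow_mul, Nat.mul_mod]
        have hNval : N = 2 ^ s + 2 ^ s := by rw [hN]; ring
        rcases ha with ⟨⟨ha1, ha2⟩, ha3⟩
        rw [Nat.odd_iff] at ha3 ⊢
        omega
      · intro a ha
        simp only [Finset.mem_filter, Finset.mem_Ioc] at ha
        show N - (N - a) = a
        have : a ≤ N := by
          have : 2 ^ (s + 1) = N := hN.symm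
          omega
        omega
      · intro a ha
        simp only [Finset.mem_filter, Finset.mem_Ioc] at ha
        show N - (N - a) = a
        have hNval : N = 2 ^ s + 2 ^ s := by rw [hN]; ring
        omega
      · intro a ha
        simp only [Finset.mem_filter, Finset.mem_Ioc] at ha
        show ((a : ℕ) : ZMod N) = ((N - (N - a) : ℕ) : ZMod N)
        have h1 : N - (N - a) = a := by
          have hNval : N = 2 ^ s + 2 ^ s := by rw [hN]; ring
          omega
        rw [h1]
    rw [hbij]
    have hcast : ∀ k ∈ (Finset.Ioc 0 (2 ^ s)).filter (fun j => Odd j),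
        ((N - k : ℕ) : ZMod N) = - (k : ZMod N) := by
      intro k hk
      simp only [Finset.mem_filter, Finset.mem_Ioc] at hk
      have hkN : k ≤ N := by
        have : 2 ^ s ≤ 2 ^ (s + 1) := Nat.pow_le_pow_right (by norm_num) (Nat.le_succ s)
        omega
      rw [Nat.cast_sub hkN, hNnat, zero_sub]
    rw [Finset.prod_congr rfl hcast]
    have hneg : ∏ x ∈ ((Finset.Ioc 0 (2 ^ s)).filter (fun j => Odd j) : Finset ℕ),
        (-(x : ZMod N)) = (-1 : ZMod N) ^ (((Finset.Ioc 0 (2 ^ s)).filter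
          (fun j => Odd j)).card) * ∏ x ∈ ((Finset.Ioc 0 (2 ^ s)).filter
          (fun j => Odd j) : Finset ℕ), (x : ZMod N) := by
      rw [← Finset.prod_const (-1 : ZMod N), ← Finset.prod_mul_distrib]
      exact Finset.prod_congr rfl fun x _ => by rw [neg_one_mul]
    rw [hneg]
    rw [card_odds s hs1]
    have : Even (2 ^ (s - 1)) := by
      rcases Nat.exists_eq_add_of_le hs with ⟨k, hk⟩
      subst hk
      exact ⟨2 ^ k, by rw [show 2 + k - 1 = k + 1 by omega]; ring⟩
    rw [this.neg_one_pow, one_mul]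
  have key' := (ZMod.intCast_eq_intCast_iff _ _ _).mp key
  have hd := key'.symm.dvd
  have hNZ : ((N : ℕ) : ℤ) = (2 : ℤ) ^ (s + 1) := by push_cast [hN]; ring
  rw [← hNZ]
  exact hd

/-- Base case: the product of all odd numbers up to `2^s` is `1` mod `2^s`, for `s ≥ 3`. -/
lemma base (s : ℕ) (hs : 3 ≤ s) : (2 : ℤ) ^ s ∣ (F 0 (2 ^ s) : ℤ) - 1 := by
  induction s, hs using Nat.le_induction with
  | base =>
    have : F 0 (2 ^ 3) = 105 := by decide +kernel
    rw [this]
    norm_num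
  | succ s hs ih =>
    have hs1 : 1 ≤ s := by omega
    have hs2 : 2 ≤ s := by omega
    have hsplit : F 0 (2 ^ (s + 1)) = F 0 (2 ^ s) * F (2 ^ s) (2 ^ (s + 1)) :=
      F_split (Nat.zero_le _) (Nat.pow_le_pow_right (by norm_num) (Nat.le_succ s))
    set B : ℤ := (F 0 (2 ^ s) : ℤ) with hB
    set H : ℤ := (F (2 ^ s) (2 ^ (s + 1)) : ℤ) with hH
    have h1 : (2 : ℤ) ^ (s + 1) ∣ H - B := half s hs2
    have h2 : (2 : ℤ) ^ s ∣ B - 1 := ih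
    have heq : (F 0 (2 ^ (s + 1)) : ℤ) - 1 = B * (H - B) + ((B - 1) * (B - 1) + 2 * (B - 1)) := by
      rw [hsplit]
      push_cast
      ring
    rw [heq]
    refine dvd_add (Dvd.dvd.mul_left h1 B) (dvd_add ?_ ?_)
    · rcases h2 with ⟨m, hm⟩
      rw [hm]
      have heq2 : (2 : ℤ) ^ s * m * ((2 : ℤ) ^ s * m) = 2 ^ (s + s) * (m * m) := by
        rw [pow_add]; ring
      rw [heq2]
      exact Dvd.dvd.mul_right (pow_dvd_pow 2 (by omega)) _
    · rcases h2 with ⟨m, hm⟩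
      rw [hm]
      exact ⟨m, by rw [pow_succ]; ring⟩

end QFAux

theorem pow_dvd_qfact_sub_two (t s n : ℕ) (ht : 1 ≤ t) (hs : 3 ≤ s) :
    (2 : ℤ) ^ s ∣ (qfact (2 ^ t) (n + 2 ^ s) : ℤ) - qfact (2 ^ t) n := by
  have hs1 : 1 ≤ s := by omega
  rw [QFAux.qfact_eq t _ ht, QFAux.qfact_eq t n ht]
  have hsplit : QFAux.F 0 (n + 2 ^ s) = QFAux.F 0 n * QFAux.F n (n + 2 ^ s) :=
    QFAux.F_split (Nat.zero_le _) (Nat.le_add_right _ _)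
  have h1 : (2 : ℤ) ^ s ∣ (QFAux.F n (n + 2 ^ s) : ℤ) - 1 := by
    have := QFAux.translate s hs1 n
    have hb := QFAux.base s hs
    have : (QFAux.F n (n + 2 ^ s) : ℤ) - 1 =
        ((QFAux.F n (n + 2 ^ s) : ℤ) - QFAux.F 0 (2 ^ s)) + ((QFAux.F 0 (2 ^ s) : ℤ) - 1) := by
      ring
    rw [this]
    exact dvd_add (QFAux.translate s hs1 n) hb
  have heq : (QFAux.F 0 (n + 2 ^ s) : ℤ) - QFAux.F 0 n
      = (QFAux.F 0 n : ℤ) * ((QFAux.F n (n + 2 ^ s) : ℤ) - 1) := by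
    rw [hsplit]
    push_cast
    ring
  rw [heq]
  exact Dvd.dvd.mul_left h1 _
end

section
/- Let p be prime, n ≥ 1 with p-adic expansion n = ∑_{i=0}^{ℓ} n_i p^i (n_ℓ ≠ 0) and digit sum S_n = ∑_{i=0}^{ℓ} n_i. Then n! = (-1)^{n+1-ℓ} · (-p)^{(n - S_n)/(p-1)} · ∏_{i=0}^{ℓ} Γ_p(⌊n/p^i⌋ + 1). -/
/-- Morita's `p`-adic gamma function on positive integers:
`Γ_p(m) = (-1)^m ∏_{j=1, p∤j}^{m-1} j`, as an integer. -/
def moritaGamma (p n : ℕ) : ℤ :=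
  (-1) ^ n * ∏ j ∈ (Finset.range n).filter (fun j => ¬ p ∣ j), (j : ℤ)

private lemma neg_one_pow_sub' (a b : ℕ) (h : b ≤ a) :
    ((-1 : ℤ)) ^ (a - b) = (-1) ^ (a + b) := by
  have : a + b = (a - b) + 2 * b := by omega
  rw [this, pow_add, pow_mul]
  norm_num

private lemma filter_dvd_prod (p m : ℕ) (hp : 0 < p) :
    ∏ j ∈ (Finset.Ico 1 (m + 1)).filter (fun j => p ∣ j), j
      = p ^ (m / p) * (m / p).factorial := by
  have himg : (Finset.Ico 1 (m + 1)).filter (fun j => p ∣ j)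
      = (Finset.Ico 1 (m / p + 1)).image (fun k => p * k) := by
    ext j
    simp only [Finset.mem_filter, Finset.mem_Ico, Finset.mem_image, Nat.lt_succ_iff]
    constructor
    · rintro ⟨⟨h1, h2⟩, k, rfl⟩
      refine ⟨k, ⟨?_, ?_⟩, rfl⟩
      · rcases Nat.eq_zero_or_pos k with rfl | hk
        · simp at h1
        · exact hk
      · exact (Nat.le_div_iff_mul_le hp).mpr (by rw [mul_comm]; exact h2)
    · rintro ⟨k, ⟨hk1, hk2⟩, rfl⟩
      have h3 : k * p ≤ m := (Nat.le_div_iff_mul_le hp).mp hk2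
      refine ⟨⟨Nat.one_le_iff_ne_zero.mpr ?_, ?_⟩, ⟨k, rfl⟩⟩
      · exact Nat.mul_ne_zero (by omega) (by omega)
      · rw [mul_comm]; omega
  rw [himg, Finset.prod_image (fun k _ l _ h => Nat.eq_of_mul_eq_mul_left hp h)]
  calc ∏ k ∈ Finset.Ico 1 (m / p + 1), p * k
      = (∏ _k ∈ Finset.Ico 1 (m / p + 1), p) * ∏ k ∈ Finset.Ico 1 (m / p + 1), k := by
        rw [← Finset.prod_mul_distrib]
    _ = p ^ (m / p) * (m / p).factorial := by
        rw [Finset.prod_const, Nat.card_Ico, Nat.add_sub_cancel,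
          Finset.prod_Ico_id_eq_factorial]

private lemma filter_not_dvd_eq (p m : ℕ) :
    (Finset.Ico 1 (m + 1)).filter (fun j => ¬ p ∣ j)
      = (Finset.range (m + 1)).filter (fun j => ¬ p ∣ j) := by
  ext j
  simp only [Finset.mem_filter, Finset.mem_Ico, Finset.mem_range]
  constructor
  · rintro ⟨⟨h1, h2⟩, hnd⟩; exact ⟨h2, hnd⟩
  · rintro ⟨h2, hnd⟩
    have hj : j ≠ 0 := by rintro rfl; exact hnd (dvd_zero p)
    exact ⟨⟨by omega, h2⟩, hnd⟩

private lemma factorial_step_nat (p m : ℕ) (hp : 0 < p) :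
    m.factorial
      = (∏ j ∈ (Finset.range (m + 1)).filter (fun j => ¬ p ∣ j), j)
        * (p ^ (m / p) * (m / p).factorial) := by
  rw [← Finset.prod_Ico_id_eq_factorial m,
    ← Finset.prod_filter_mul_prod_filter_not (Finset.Ico 1 (m + 1)) (fun j => p ∣ j)
      (fun j => j),
    filter_dvd_prod p m hp, filter_not_dvd_eq p m, mul_comm]

private lemma factorial_step (p m : ℕ) (hp : 0 < p) :
    (m.factorial : ℤ)
      = (-1) ^ (m + 1) * moritaGamma p (m + 1)
          * ((p : ℤ) ^ (m / p) * ((m / p).factorial : ℤ)) := by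
  have h := factorial_step_nat p m hp
  have hsq : ((-1 : ℤ)) ^ (m + 1) * (-1) ^ (m + 1) = 1 := by
    rw [← pow_add]
    exact Even.neg_one_pow ⟨m + 1, by ring⟩
  rw [moritaGamma, ← mul_assoc, ← mul_assoc, hsq, one_mul]
  rw_mod_cast [h]
  push_cast
  ring

private lemma main_aux (p : ℕ) (hp : p.Prime) : ∀ n, 1 ≤ n →
    (n.factorial : ℤ)
      = (-1) ^ (n + 1 - Nat.log p n)
          * (-(p : ℤ)) ^ (∑ i ∈ Finset.range (Nat.log p n + 1), n / p ^ (i + 1))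
          * ∏ i ∈ Finset.range (Nat.log p n + 1), moritaGamma p (n / p ^ i + 1) := by
  intro n
  induction n using Nat.strong_induction_on with
  | _ n ih =>
    intro hn
    have hp2 : 2 ≤ p := hp.two_le
    by_cases hnp : n < p
    · -- base case
      have hlog : Nat.log p n = 0 := Nat.log_eq_zero_iff.mpr (Or.inl hnp)
      have hdiv : n / p = 0 := Nat.div_eq_of_lt hnp
      have h := factorial_step p n (by omega)
      rw [hdiv] at h
      rw [hlog, Finset.range_one, Finset.sum_singleton, Finset.prod_singleton,
        zero_add, pow_one, hdiv, h]
      simp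
    · -- inductive step
      push_neg at hnp
      set m := n / p with hm
      have hm1 : 1 ≤ m := (Nat.one_le_div_iff (by omega)).mpr hnp
      have hmn : m < n := Nat.div_lt_self (by omega) (by omega)
      set L := Nat.log p m with hL
      have hlog : Nat.log p n = L + 1 := by
        have h1 := Nat.log_div_base p n
        rw [← hm, ← hL] at h1
        have h2 : 0 < Nat.log p n := Nat.log_pos (by omega) hnp
        omega
      have hLm : L ≤ m := Nat.log_le_self p m
      have hdivs : ∀ i : ℕ, n / p ^ (i + 1) = m / p ^ i := by
        intro i
        rw [hm, Nat.div_div_eq_div_mul, ← pow_succ']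
      have hsum : (∑ i ∈ Finset.range (Nat.log p n + 1), n / p ^ (i + 1))
          = m + ∑ i ∈ Finset.range (L + 1), m / p ^ (i + 1) := by
        rw [hlog, Finset.sum_range_succ']
        simp only [zero_add, pow_one]
        rw [← hm, add_comm]
        congr 1
        exact Finset.sum_congr rfl fun i _ => hdivs (i + 1)
      have hprod : (∏ i ∈ Finset.range (Nat.log p n + 1), moritaGamma p (n / p ^ i + 1))
          = (∏ i ∈ Finset.range (L + 1), moritaGamma p (m / p ^ i + 1))
            * moritaGamma p (n + 1) := by
        rw [hlog, Finset.prod_range_succ']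
        simp only [pow_zero, Nat.div_one]
        congr 1
        exact Finset.prod_congr rfl fun i _ => by rw [hdivs i]
      have hIH := ih m hmn hm1
      have hstep := factorial_step p n (by omega)
      rw [← hm] at hstep
      rw [hsum, hprod, hlog, hstep, hIH, ← hL]
      rw [neg_one_pow_sub' (m + 1) L (hLm.trans (Nat.le_succ m)),
        neg_one_pow_sub' (n + 1) (L + 1) (by omega)]
      rw [show (-(p : ℤ)) ^ (m + ∑ i ∈ Finset.range (L + 1), m / p ^ (i + 1))
          = (-1) ^ m * (p : ℤ) ^ m
            * (-(p : ℤ)) ^ (∑ i ∈ Finset.range (L + 1), m / p ^ (i + 1)) from by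
        rw [pow_add, neg_pow]]
      have hsign : ((-1 : ℤ)) ^ (n + 1) * (-1) ^ (m + 1 + L)
          = (-1) ^ (n + 1 + (L + 1)) * (-1) ^ m := by
        rw [← pow_add, ← pow_add]
        congr 1
        omega
      calc ((-1 : ℤ)) ^ (n + 1) * moritaGamma p (n + 1)
            * ((p : ℤ) ^ m
              * ((-1) ^ (m + 1 + L)
                  * (-(p : ℤ)) ^ (∑ i ∈ Finset.range (L + 1), m / p ^ (i + 1))
                  * ∏ i ∈ Finset.range (L + 1), moritaGamma p (m / p ^ i + 1)))
          = ((-1 : ℤ)) ^ (n + 1) * (-1) ^ (m + 1 + L)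
              * ((p : ℤ) ^ m
                * (-(p : ℤ)) ^ (∑ i ∈ Finset.range (L + 1), m / p ^ (i + 1))
                * ((∏ i ∈ Finset.range (L + 1), moritaGamma p (m / p ^ i + 1))
                    * moritaGamma p (n + 1))) := by ring
        _ = _ := by rw [hsign]; ring

theorem factorial_eq_prod_moritaGamma (p n : ℕ) (hp : p.Prime) (hn : 1 ≤ n) :
    (n.factorial : ℤ)
      = (-1) ^ (n + 1 - Nat.log p n)
          * (-(p : ℤ)) ^ ((n - (Nat.digits p n).sum) / (p - 1))
          * ∏ i ∈ Finset.range (Nat.log p n + 1), moritaGamma p (n / p ^ i + 1) := by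
  have hkey := Nat.sub_one_mul_sum_log_div_pow_eq_sub_sum_digits (p := p) n
  have hp1 : 0 < p - 1 := by have := hp.two_le; omega
  have hexp : (n - (Nat.digits p n).sum) / (p - 1)
      = ∑ i ∈ Finset.range (Nat.log p n + 1), n / p ^ (i + 1) := by
    rw [← hkey, Nat.mul_div_cancel_left _ hp1]
  rw [hexp]
  exact main_aux p hp n hn
end
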